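/- Composition with the unit induces equivalence of hom-categories for a KZ doctrine: for a KZ doctrine (P, y) on a 2-category C and objects A, B with B P-cocomplete, precomposition with y_A : A → PA induces an equivalence of categories C_ccts(PA, B) ≃ C(A, B), where C_ccts(PA, B) is the full subcategory of C(PA, B) on the P-cocontinuous 1-cells (those preserving left extensions along units). -/

import Mathlib

open CategoryTheory Bicategory

universe w v u

variable {B : Type u} [Bicategory.{w, v} B]

/-- A 2-cell `η : I ⟶ L ≫ R` exhibits `R` as a left (Kan) extension of `I` along `L` when
pasting with `η` gives a bijection between 2-cells `R ⟶ M` and 2-cells `I ⟶ L ≫ M`. -/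
def IsLeftExt {a b c : B} (L : a ⟶ b) (I : a ⟶ c) (R : b ⟶ c) (η : I ⟶ L ≫ R) : Prop :=
  ∀ M : b ⟶ c, Function.Bijective (fun σ : R ⟶ M => η ≫ L ◁ σ)

/-- A KZ doctrine on a bicategory, in the Marmolejo–Wood left-extension form: an object
assignment `obj`, units `y`, and for every `F : a ⟶ obj b` a left extension `ext F` of `F`
along `y a` exhibited by an invertible 2-cell `c F`, such that the extension of `y a` is the
identity exhibited by the identity, and extensions preserve extensions. -/
structure KZDoctrine (B : Type u) [Bicategory.{w, v} B] where
  obj : B → B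
  y : ∀ a : B, a ⟶ obj a
  ext : ∀ {a b : B}, (a ⟶ obj b) → (obj a ⟶ obj b)
  c : ∀ {a b : B} (F : a ⟶ obj b), F ≅ y a ≫ ext F
  isLan : ∀ {a b : B} (F : a ⟶ obj b), IsLeftExt (y a) F (ext F) (c F).hom
  ext_y : ∀ a : B, ext (y a) = 𝟙 (obj a)
  c_y : ∀ a : B, HEq (c (y a)) (ρ_ (y a)).symm
  pres : ∀ {a b d : B} (F : a ⟶ obj b) (G : b ⟶ obj d),
    IsLeftExt (y a) (F ≫ ext G) (ext F ≫ ext G)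
      (((c F).hom ▷ ext G) ≫ (α_ (y a) (ext F) (ext G)).hom)

/-- A 1-cell `E : P.obj a ⟶ X` is `P`-cocontinuous when it preserves the canonical left
extensions along units. -/
def PCocontinuous (P : KZDoctrine B) {a X : B} (E : P.obj a ⟶ X) : Prop :=
  ∀ (d : B) (F : d ⟶ P.obj a),
    IsLeftExt (P.y d) (F ≫ E) (P.ext F ≫ E)
      (((P.c F).hom ▷ E) ≫ (α_ (P.y d) (P.ext F) E).hom)

/-- An object `X` is `P`-cocomplete when every `F : d ⟶ X` admits a left extension along the
unit `y d`, exhibited by an invertible 2-cell, and these extensions preserve the canonical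
left extensions `ext G`. -/
def PCocomplete (P : KZDoctrine B) (X : B) : Prop :=
  ∀ (d : B) (F : d ⟶ X), ∃ (Fb : P.obj d ⟶ X) (cF : F ⟶ P.y d ≫ Fb),
    IsIso cF ∧ IsLeftExt (P.y d) F Fb cF ∧
      ∀ (e : B) (G : e ⟶ P.obj d),
        IsLeftExt (P.y e) (G ≫ Fb) (P.ext G ≫ Fb)
          (((P.c G).hom ▷ Fb) ≫ (α_ (P.y e) (P.ext G) Fb).hom)

/-- Precomposition with the unit `y a`, as a functor from the full subcategory of the
hom-category `P.obj a ⟶ b` on the `P`-cocontinuous 1-cells to the hom-category `a ⟶ b`. -/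
def precompUnit (P : KZDoctrine B) (a b : B) :
    ObjectProperty.FullSubcategory (fun E : P.obj a ⟶ b => PCocontinuous P E) ⥤ (a ⟶ b) where
  obj E := P.y a ≫ E.obj
  map {E E'} η := P.y a ◁ η.hom
  map_id E := Bicategory.whiskerLeft_id _ _
  map_comp η θ := Bicategory.whiskerLeft_comp _ η.hom θ.hom

/-- Key lemma: for a `P`-cocontinuous `E`, whiskering with the unit is bijective on 2-cells. -/
lemma whiskerLeft_y_bijective (P : KZDoctrine B) {a b : B} {E : P.obj a ⟶ b}
    (hE : PCocontinuous P E) (E' : P.obj a ⟶ b) :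
    Function.Bijective (fun σ : E ⟶ E' => P.y a ◁ σ) := by
  have h1 := hE a (P.y a) E'
  have hι : P.ext (P.y a) ≫ E = 𝟙 (P.obj a) ≫ E := by rw [P.ext_y a]
  let ι : P.ext (P.y a) ≫ E ≅ E := eqToIso hι ≪≫ λ_ E
  let η : P.y a ≫ E ⟶ P.y a ≫ P.ext (P.y a) ≫ E :=
    ((P.c (P.y a)).hom ▷ E) ≫ (α_ (P.y a) (P.ext (P.y a)) E).hom
  haveI hη : IsIso η := by
    show IsIso (((P.c (P.y a)).hom ▷ E) ≫ (α_ (P.y a) (P.ext (P.y a)) E).hom)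
    infer_instance
  let θ : P.y a ≫ E ⟶ P.y a ≫ E := η ≫ P.y a ◁ ι.hom
  haveI hθ : IsIso θ := by
    show IsIso (η ≫ P.y a ◁ ι.hom)
    infer_instance
  have key : (fun σ : E ⟶ E' => P.y a ◁ σ) =
      (fun τ : P.y a ≫ E ⟶ P.y a ≫ E' => inv θ ≫ τ) ∘
        ((fun τ : P.ext (P.y a) ≫ E ⟶ E' => η ≫ P.y a ◁ τ) ∘
          (fun σ : E ⟶ E' => ι.hom ≫ σ)) := by
    funext σ
    show P.y a ◁ σ = inv θ ≫ (η ≫ P.y a ◁ (ι.hom ≫ σ))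
    rw [Bicategory.whiskerLeft_comp, ← Category.assoc η]
    show P.y a ◁ σ = inv θ ≫ θ ≫ P.y a ◁ σ
    rw [IsIso.inv_hom_id_assoc]
  rw [key]
  exact ((asIso θ).homFromEquiv.bijective).comp (h1.comp (ι.symm.homFromEquiv.bijective))

/-- For a KZ doctrine `(P, y)` and a `P`-cocomplete object `b`, precomposition with the unit
`y a` induces an equivalence between the category of `P`-cocontinuous 1-cells `P.obj a ⟶ b`
and the hom-category `a ⟶ b`. -/
theorem precomp_unit_equivalence (P : KZDoctrine B) (a b : B) (hb : PCocomplete P b) :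
    (precompUnit P a b).IsEquivalence := by
  constructor
  · constructor
    intro E E' f g h
    exact InducedCategory.hom_ext ((whiskerLeft_y_bijective P E.property E'.obj).injective h)
  · constructor
    intro E E' f
    exact ⟨InducedCategory.homMk ((whiskerLeft_y_bijective P E.property E'.obj).surjective f |>.choose),
      (whiskerLeft_y_bijective P E.property E'.obj).surjective f |>.choose_spec⟩
  · constructor
    intro F
    obtain ⟨Fb, cF, hiso, hlan, hpres⟩ := hb a F
    exact ⟨⟨Fb, fun d G => hpres d G⟩, ⟨(@asIso _ _ _ _ cF hiso).symm⟩⟩
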